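/- Let k ≥ 2, let L ≥ 1, and let (t_{i,j})_{1≤i≤k,1≤j≤k} be nonnegative integers satisfying the RID property. For 1 ≤ b < k set L_b = t_{k−b,b+1} − t_{k−b,b}, set L_k = L, and set L_{1:b} = Σ_{b'=1}^{b} L_{b'} (with L_{1:0} = 0). Fix integers b, i, s, u with 2 ≤ b ≤ k, 1 ≤ i ≤ b, L_{1:(b−1)} < s ≤ L_{1:b}, and b < u ≤ k, and define l_i = s − 1 − L_{1:(i−1)}. Then l_i + 1 + t_{k−i+1,i} − t_{k−i+1,u} < 0. -/

import Mathlib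

/-- An `n × d` array of integers `t` (1-indexed, values assumed nonnegative separately)
satisfies the refined increasing difference (RID) property if for all
`1 ≤ i < i' ≤ n` and `1 ≤ j < j' ≤ d` one has `0 ≤ t i j' - t i j < t i' j' - t i' j`,
where equality in the first inequality is allowed only when `i = 1`. -/
def RID (n d : ℕ) (t : ℕ → ℕ → ℤ) : Prop :=
  ∀ i i' j j' : ℕ, 1 ≤ i → i < i' → i' ≤ n → 1 ≤ j → j < j' → j' ≤ d →
    t i j ≤ t i j' ∧ (2 ≤ i → t i j < t i j') ∧ t i j' - t i j < t i' j' - t i' j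

/-- The phase lengths: `L_b = t (k-b) (b+1) - t (k-b) b` for `1 ≤ b < k` and `L_k = L`. -/
def Lb (k : ℕ) (L : ℤ) (t : ℕ → ℕ → ℤ) (b : ℕ) : ℤ :=
  if b < k then t (k - b) (b + 1) - t (k - b) b else L

/-- The partial sums `L_{1:b} = ∑_{b'=1}^{b} L_{b'}` (so `L_{1:0} = 0`). -/
def Lsum (k : ℕ) (L : ℤ) (t : ℕ → ℕ → ℤ) (b : ℕ) : ℤ :=
  ∑ b' ∈ Finset.Icc 1 b, Lb k L t b'

/-- Case `b < u ≤ k` of the inductive step of the shift-XOR elimination: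
`l_i + 1 + t (k-i+1) i - t (k-i+1) u < 0`, where `l_i = s - 1 - L_{1:(i-1)}`.
-/
theorem stmt4 (k : ℕ) (hk : 2 ≤ k) (L : ℤ) (hL : 1 ≤ L) (t : ℕ → ℕ → ℤ)
    (ht0 : ∀ i j : ℕ, 1 ≤ i → i ≤ k → 1 ≤ j → j ≤ k → 0 ≤ t i j)
    (hRID : RID k k t)
    (b i u : ℕ) (s : ℤ)
    (hb2 : 2 ≤ b) (hbk : b ≤ k) (hi1 : 1 ≤ i) (hib : i ≤ b)
    (hs1 : Lsum k L t (b - 1) < s) (hs2 : s ≤ Lsum k L t b)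
    (hu1 : b < u) (huk : u ≤ k) :
    (s - 1 - Lsum k L t (i - 1)) + 1 + t (k - i + 1) i - t (k - i + 1) u
      < 0 := by
  have hbk' : b < k := lt_of_lt_of_le hu1 huk
  -- row monotonicity
  have mono : ∀ r j j' : ℕ, 1 ≤ r → r ≤ k → 1 ≤ j → j ≤ j' → j' ≤ k →
      t r j ≤ t r j' := by
    intro r j j' hr1 hrk hj hjj hj'k
    rcases eq_or_lt_of_le hjj with rfl | hjj'
    · exact le_refl _
    rcases eq_or_lt_of_le hrk with rfl | hrk'
    · have h1 := hRID 1 r j j' le_rfl (by omega) le_rfl hj hjj' hj'k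
      linarith [h1.1, h1.2.2]
    · exact (hRID r k j j' hr1 hrk' le_rfl hj hjj' hj'k).1
  -- telescoping
  have tele : ∀ (f : ℕ → ℤ) (m n : ℕ), m ≤ n →
      ∑ j ∈ Finset.Ioc m n, (f (j+1) - f j) = f (n+1) - f (m+1) := by
    intro f m n h
    induction n, h using Nat.le_induction with
    | base => simp
    | succ n hn ih =>
      rw [Finset.sum_Ioc_succ_top (by omega), ih]; ring
  have hIcc : ∀ m : ℕ, Finset.Icc 1 m = Finset.Ioc 0 m := by
    intro m; rw [← Finset.Icc_add_one_left_eq_Ioc, zero_add]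
  have hsplit : Lsum k L t (i-1) + ∑ b' ∈ Finset.Ioc (i-1) b, Lb k L t b'
      = Lsum k L t b := by
    unfold Lsum
    rw [hIcc, hIcc]
    exact Finset.sum_Ioc_consecutive _ (by omega) (by omega)
  have key : ∀ b' ∈ Finset.Ioc (i-1) b,
      Lb k L t b' < t (k - i + 1) (b'+1) - t (k - i + 1) b' := by
    intro b' hb'
    rw [Finset.mem_Ioc] at hb'
    rw [Lb, if_pos (by omega)]
    exact (hRID (k - b') (k - i + 1) b' (b'+1) (by omega) (by omega) (by omega)
      (by omega) (by omega) (by omega)).2.2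
  have hne : (Finset.Ioc (i-1) b).Nonempty := Finset.nonempty_Ioc.mpr (by omega)
  have hsum := Finset.sum_lt_sum_of_nonempty hne key
  rw [tele _ _ _ (by omega)] at hsum
  have hi' : i - 1 + 1 = i := by omega
  rw [hi'] at hsum
  have hmon : t (k - i + 1) (b+1) ≤ t (k - i + 1) u :=
    mono _ _ _ (by omega) (by omega) (by omega) (by omega) huk
  linarith
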